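/- Let E ⊂ ℝ be compact with min E < max E, let L(E) be the set of limit points of E. Let f: E → ℝ be upper semicontinuous and left-continuous, and g ∈ C(E) strictly increasing. Assume: (i) for every bounded connected component I = (I⁻, I⁺) of ℝ \ E with endpoints in E, (f(I⁺) − f(I⁻))/(g(I⁺) − g(I⁻)) ≤ 1; (ii) for every t ∈ L(E) which is an accumulation point of L(E) ∩ (−∞, t), liminf_{s↑t, s∈L(E)} (f(t)−f(s))/(g(t)−g(s)) ≤ 1. Then the map s ↦ f(s) − g(s) is nonincreasing on E; in particular f(max E) − f(min E) ≤ g(max E) − g(min E). -/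

import Mathlib

open Filter Topology Set


lemma my_accPt_iff {x : ℝ} {C : Set ℝ} : AccPt x (𝓟 C) ↔ (𝓝[C \ {x}] x).NeBot := by
  rw [AccPt, nhdsWithin, nhdsWithin, inf_assoc, inf_principal]
  congr! 2
  rw [diff_eq, Set.inter_comm]

lemma aux_closed (E C : Set ℝ) (hEc : IsClosed E) (hC : IsClosed C) (f g : ℝ → ℝ)
    (husc : UpperSemicontinuousOn f E) (hg : ContinuousOn g E) (k μ : ℝ) :
    IsClosed {t | t ∈ E ∧ t ∈ C ∧ k ≤ f t - μ * g t} := by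
  rw [← closure_subset_iff_isClosed]
  intro x hx
  have hsub : {t | t ∈ E ∧ t ∈ C ∧ k ≤ f t - μ * g t} ⊆ E ∩ C := fun t ht => ⟨ht.1, ht.2.1⟩
  have hxEC : x ∈ E ∩ C := (IsClosed.closure_subset_iff (hEc.inter hC)).mpr hsub hx
  refine ⟨hxEC.1, hxEC.2, ?_⟩
  by_contra hcon
  push_neg at hcon
  set t0 := k - (f x - μ * g x) with ht0
  have ht0pos : 0 < t0 := by rw [ht0]; linarith
  have h1 : ∀ᶠ s in 𝓝[E] x, f s < f x + t0 / 2 := husc x hxEC.1 (f x + t0 / 2) (by linarith)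
  have hgt : Tendsto (fun s => μ * g s) (𝓝[E] x) (𝓝 (μ * g x)) :=
    Tendsto.const_mul μ (hg x hxEC.1)
  have h2 : ∀ᶠ s in 𝓝[E] x, μ * g x - t0 / 2 < μ * g s :=
    hgt.eventually (eventually_gt_nhds (by linarith))
  have h3 : ∀ᶠ s in 𝓝[E] x, f s - μ * g s < k := by
    filter_upwards [h1, h2] with s hs1 hs2
    linarith
  have hnb : (𝓝[{t | t ∈ E ∧ t ∈ C ∧ k ≤ f t - μ * g t}] x).NeBot :=
    mem_closure_iff_nhdsWithin_neBot.mp hx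
  have h4 : ∀ᶠ s in 𝓝[{t | t ∈ E ∧ t ∈ C ∧ k ≤ f t - μ * g t}] x, f s - μ * g s < k :=
    (nhdsWithin_mono x (fun t ht => ht.1)) h3
  have h5 : ∀ᶠ s in 𝓝[{t | t ∈ E ∧ t ∈ C ∧ k ≤ f t - μ * g t}] x,
      k ≤ f s - μ * g s := by
    filter_upwards [self_mem_nhdsWithin] with s hs
    exact hs.2.2
  obtain ⟨s, hs1, hs2⟩ := (h4.and h5).exists
  linarith


lemma aux_no_flat (u v : ℝ) (h0 : 0 < u) (huv : u < v) (σ : ℝ → ℝ)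
    (hmono : ∀ x ∈ Ioc (0:ℝ) v, ∀ y ∈ Ioc (0:ℝ) v, x < y → σ x < σ y)
    (hflat : ∀ δ ∈ Ioc u v, ∀ x : ℕ → ℝ, (∀ n, 0 < x n) → (∀ n, x n < x (n+1)) →
      (∀ n, x n < δ) → Tendsto x atTop (𝓝 δ) →
      Tendsto (fun n => (σ δ - σ (x n)) / (δ - x n)) atTop (𝓝 0)) : False := by
  classical
  set J : ℝ → ℝ := fun y => sInf (σ '' Ioc y v) - σ y with hJdef
  have himg : ∀ y, u ≤ y → y < v → (σ '' Ioc y v).Nonempty :=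
    fun y hy hyv => ⟨σ v, v, ⟨hyv, le_refl v⟩, rfl⟩
  have hbdd : ∀ y, u ≤ y → y < v → σ y ∈ lowerBounds (σ '' Ioc y v) := by
    rintro y hy hyv _ ⟨z, hz, rfl⟩
    exact le_of_lt (hmono y ⟨lt_of_lt_of_le h0 hy, le_of_lt hyv⟩ z
      ⟨lt_trans (lt_of_lt_of_le h0 hy) hz.1, hz.2⟩ hz.1)
  have hJ0 : ∀ y, u ≤ y → y < v → 0 ≤ J y := by
    intro y hy hyv
    have := le_csInf (himg y hy hyv) (hbdd y hy hyv)
    simp only [hJdef]; linarith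
  have hJge : ∀ y, u ≤ y → y < v → ∀ z, y < z → z ≤ v → σ y + J y ≤ σ z := by
    intro y hy hyv z hz1 hz2
    have : sInf (σ '' Ioc y v) ≤ σ z :=
      csInf_le ⟨σ y, hbdd y hy hyv⟩ ⟨z, ⟨hz1, hz2⟩, rfl⟩
    simp only [hJdef]; linarith
  by_cases hD : ∀ p q : ℝ, u ≤ p → p < q → q ≤ v → ∃ y, p ≤ y ∧ y < q ∧ 0 < J y
  · -- jumps dense case
    have step : ∀ p : ℝ × ℝ, (u ≤ p.1 ∧ p.1 < p.2 ∧ p.2 ≤ v) →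
        ∃ p' : ℝ × ℝ, (u ≤ p'.1 ∧ p'.1 < p'.2 ∧ p'.2 ≤ v) ∧
          p.1 < p'.1 ∧ p'.2 ≤ p.2 ∧ p'.2 - p'.1 ≤ (p.2 - p.1)/2 ∧ p'.2 - p'.1 ≤ J p'.1 := by
      rintro ⟨p, q⟩ ⟨hup, hpq, hqv⟩
      simp only [] at hup hpq hqv
      obtain ⟨y, hy1, hy2, hJy⟩ := hD (p + (q-p)/3) (p + (q-p)/2) (by linarith) (by linarith)
        (by linarith)
      set b : ℝ := min (y + J y) (min q (y + (q-p)/2)) with hbdef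
      have hb1 : b ≤ y + J y := min_le_left _ _
      have hb2 : b ≤ q := le_trans (min_le_right _ _) (min_le_left _ _)
      have hb3 : b ≤ y + (q-p)/2 := le_trans (min_le_right _ _) (min_le_right _ _)
      have hb4 : y < b := lt_min (by linarith) (lt_min (by linarith) (by linarith))
      refine ⟨(y, b), ⟨by linarith, hb4, by linarith⟩, by linarith, by linarith, ?_, ?_⟩
      · simp only []; linarith
      · simp only []; linarith
    have hstep' : ∀ p : {x : ℝ × ℝ // u ≤ x.1 ∧ x.1 < x.2 ∧ x.2 ≤ v}, ∃ p' : ℝ × ℝ,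
        (u ≤ p'.1 ∧ p'.1 < p'.2 ∧ p'.2 ≤ v) ∧
        p.1.1 < p'.1 ∧ p'.2 ≤ p.1.2 ∧ p'.2 - p'.1 ≤ (p.1.2 - p.1.1)/2 ∧ p'.2 - p'.1 ≤ J p'.1 :=
      fun p => step p.1 p.2
    set G : {x : ℝ × ℝ // u ≤ x.1 ∧ x.1 < x.2 ∧ x.2 ≤ v} →
        {x : ℝ × ℝ // u ≤ x.1 ∧ x.1 < x.2 ∧ x.2 ≤ v} :=
      fun p => ⟨Classical.choose (hstep' p), (Classical.choose_spec (hstep' p)).1⟩ with hGdef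
    set x0 : {x : ℝ × ℝ // u ≤ x.1 ∧ x.1 < x.2 ∧ x.2 ≤ v} := ⟨(u, v), le_refl u, huv, le_refl v⟩
      with hx0
    set s : ℕ → {x : ℝ × ℝ // u ≤ x.1 ∧ x.1 < x.2 ∧ x.2 ≤ v} := fun n => G^[n] x0 with hs
    have hsucc : ∀ n, s (n+1) = G (s n) := by
      intro n; simp only [hs, Function.iterate_succ_apply']
    have hrel : ∀ n, (s n).1.1 < (s (n+1)).1.1 ∧ (s (n+1)).1.2 ≤ (s n).1.2 ∧
        (s (n+1)).1.2 - (s (n+1)).1.1 ≤ ((s n).1.2 - (s n).1.1)/2 ∧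
        (s (n+1)).1.2 - (s (n+1)).1.1 ≤ J ((s (n+1)).1.1) := by
      intro n
      rw [hsucc n]
      exact (Classical.choose_spec (hstep' (s n))).2
    set q : ℕ → ℝ := fun n => (s n).1.1 with hq
    set β : ℕ → ℝ := fun n => (s n).1.2 with hβ
    have hgood : ∀ n, u ≤ q n ∧ q n < β n ∧ β n ≤ v := fun n => (s n).2
    have hqmono : StrictMono q := strictMono_nat_of_lt_succ (fun n => (hrel n).1)
    have hβanti : Antitone β := antitone_nat_of_succ_le (fun n => (hrel n).2.1)
    have hJq : ∀ n, β (n+1) - q (n+1) ≤ J (q (n+1)) := fun n => (hrel n).2.2.2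
    have hqv : ∀ n, q n ≤ v := fun n => le_of_lt (lt_of_lt_of_le (hgood n).2.1 (hgood n).2.2)
    have hbddq : BddAbove (Set.range q) := ⟨v, by rintro _ ⟨n, rfl⟩; exact hqv n⟩
    set lam : ℝ := ⨆ n, q n with hlam
    have hqlam : ∀ n, q n < lam :=
      fun n => lt_of_lt_of_le (hqmono (Nat.lt_succ_self n)) (le_ciSup hbddq (n+1))
    have hlamβ : ∀ n, lam ≤ β n := by
      intro n
      apply ciSup_le
      intro m
      rcases le_or_gt m n with h | h
      · exact le_of_lt (lt_of_le_of_lt (hqmono.monotone h) (hgood n).2.1)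
      · exact le_of_lt (lt_of_lt_of_le (hgood m).2.1 (hβanti (le_of_lt h)))
    have htendq : Tendsto q atTop (𝓝 lam) := tendsto_atTop_ciSup hqmono.monotone hbddq
    have hq0 : q 0 = u := rfl
    have hulam : u < lam := hq0 ▸ hqlam 0
    have hlamv : lam ≤ v := le_trans (hlamβ 0) (hgood 0).2.2
    have hquot : ∀ n, 1 ≤ (σ lam - σ (q (n+1))) / (lam - q (n+1)) := by
      intro n
      have hd : 0 < lam - q (n+1) := by linarith [hqlam (n+1)]
      rw [le_div_iff₀ hd]
      have hqv' : q (n+1) < v := lt_of_lt_of_le (hgood (n+1)).2.1 (hgood (n+1)).2.2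
      have h1 : σ (q (n+1)) + J (q (n+1)) ≤ σ lam :=
        hJge (q (n+1)) (hgood (n+1)).1 hqv' lam (hqlam (n+1)) hlamv
      have h2 : lam ≤ β (n+1) := hlamβ (n+1)
      have h3 := hJq n
      linarith
    have happly := hflat lam ⟨hulam, hlamv⟩ (fun n => q (n+1))
      (fun n => lt_of_lt_of_le h0 (hgood (n+1)).1)
      (fun n => hqmono (by omega))
      (fun n => hqlam (n+1))
      (htendq.comp (tendsto_add_atTop_nat 1))
    have hev : ∀ᶠ n in atTop, (σ lam - σ (q (n+1))) / (lam - q (n+1)) < 1 := by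
      have : Iio (1:ℝ) ∈ 𝓝 (0:ℝ) := Iio_mem_nhds one_pos
      exact happly.eventually this
    obtain ⟨n, hn⟩ := hev.exists
    linarith [hquot n]
  · -- no jumps on some interval
    push_neg at hD
    obtain ⟨α, β, huα, hαβ, hβv, hJz⟩ := hD
    have hJzero : ∀ y, α ≤ y → y < β → J y = 0 := by
      intro y h1 h2
      have := hJz y h1 h2
      have h3 := hJ0 y (le_trans huα h1) (lt_of_lt_of_le h2 hβv)
      linarith
    have key2 : ∀ κ : ℝ, 0 < κ → σ β - σ α ≤ κ * (β - α) := by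
      intro κ hκ
      set A := {x | x ∈ Icc α β ∧ σ β - σ x ≤ κ * (β - x)} with hA
      have hAne : β ∈ A := ⟨⟨le_of_lt hαβ, le_refl β⟩, by simp⟩
      have hAbdd : BddBelow A := ⟨α, fun x hx => hx.1.1⟩
      set y := sInf A with hy
      have hαy : α ≤ y := le_csInf ⟨β, hAne⟩ (fun x hx => hx.1.1)
      have hyβ : y ≤ β := csInf_le hAbdd hAne
      have hyA : y ∈ A := by
        refine ⟨⟨hαy, hyβ⟩, ?_⟩
        rcases eq_or_lt_of_le hyβ with h | hyβ'
        · rw [h]; simp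
        · have hy0 : 0 < y := lt_of_lt_of_le h0 (le_trans huα hαy)
          have hJy : J y = 0 := hJzero y hαy hyβ'
          have huy : u ≤ y := le_trans huα hαy
          have hyv : y < v := lt_of_lt_of_le hyβ' hβv
          apply le_of_forall_pos_le_add
          intro ε hε
          have hinf : sInf (σ '' Ioc y v) < σ y + ε := by
            have : sInf (σ '' Ioc y v) = σ y + J y := by simp only [hJdef]; ring
            rw [this, hJy]; linarith
          obtain ⟨w, ⟨z, hz, rfl⟩, hσz⟩ := exists_lt_of_csInf_lt (himg y huy hyv) hinf
          have hlt : y < min z β := lt_min hz.1 hyβ'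
          obtain ⟨x, hxA, hx⟩ := exists_lt_of_csInf_lt ⟨β, hAne⟩ hlt
          have hyx : y ≤ x := csInf_le hAbdd hxA
          rcases eq_or_lt_of_le hyx with h | hyx'
          · rw [← h] at hxA
            linarith [hxA.2]
          · have hxz : x < z := lt_of_lt_of_le hx (min_le_left _ _)
            have hσxz : σ x < σ z := hmono x ⟨lt_trans hy0 hyx',
                le_trans (le_of_lt (lt_of_lt_of_le hx (min_le_right _ _))) hβv⟩ z
                ⟨lt_trans (lt_of_lt_of_le h0 huy) hz.1, hz.2⟩ hxz
            have := hxA.2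
            have hxy2 : σ y ≤ σ x := le_of_lt (hmono y ⟨hy0, le_of_lt hyv⟩ x
              ⟨lt_trans hy0 hyx', le_trans (le_of_lt (lt_of_lt_of_le hx (min_le_right _ _))) hβv⟩
              hyx')
            nlinarith [mul_nonneg (le_of_lt hκ) (sub_nonneg.mpr hyx)]
      rcases eq_or_lt_of_le hαy with h | hαy'
      · rw [← h] at hyA
        exact hyA.2
      · exfalso
        -- extension step using hflat at y
        have hyβ' : y ≤ β := hyβ
        have huy : u < y := lt_of_le_of_lt huα hαy'
        have hyv : y ≤ v := le_trans hyβ hβv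
        set x : ℕ → ℝ := fun n => y - (y - α)/(n+2) with hxdef
        have hcast : ∀ n : ℕ, (1:ℝ) < (n:ℝ) + 2 := by
          intro n
          have := Nat.cast_nonneg (α := ℝ) n
          linarith
        have hxαlt : ∀ n, α < x n := by
          intro n
          have h1 : (y - α)/(n+2) < y - α := div_lt_self (by linarith) (hcast n)
          simp only [hxdef]; linarith
        have hxpos : ∀ n, 0 < x n :=
          fun n => lt_trans (lt_of_lt_of_le h0 huα) (hxαlt n)
        have hxlt : ∀ n, x n < y := by
          intro n
          have : 0 < (y - α)/((n:ℝ)+2) := div_pos (by linarith) (by linarith [hcast n])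
          simp only [hxdef]; linarith
        have hxmono : ∀ n, x n < x (n+1) := by
          intro n
          simp only [hxdef]
          have h1 : (y - α)/((n:ℝ)+1+2) < (y - α)/((n:ℝ)+2) := by
            apply div_lt_div_of_pos_left (by linarith) (by positivity) (by linarith)
          push_cast
          linarith
        have hxtend : Tendsto x atTop (𝓝 y) := by
          have h1 : Tendsto (fun n : ℕ => ((n:ℝ)+2)) atTop atTop := by
            apply tendsto_atTop_add_const_right
            exact tendsto_natCast_atTop_atTop
          have h2 : Tendsto (fun n : ℕ => (y - α)/((n:ℝ)+2)) atTop (𝓝 0) :=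
            Tendsto.div_atTop tendsto_const_nhds h1
          have h3 : Tendsto (fun _ : ℕ => y) atTop (𝓝 y) := tendsto_const_nhds
          have := h3.sub h2
          simpa using this
        have := hflat y ⟨huy, hyv⟩ x hxpos hxmono hxlt hxtend
        have hev : ∀ᶠ n in atTop, (σ y - σ (x n)) / (y - x n) < κ :=
          this.eventually (Iio_mem_nhds hκ)
        obtain ⟨n, hn⟩ := hev.exists
        have hd : 0 < y - x n := by linarith [hxlt n]
        have hb : σ y - σ (x n) ≤ κ * (y - x n) := le_of_lt ((div_lt_iff₀ hd).mp hn)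
        have hxA : x n ∈ A := by
          have hαxn : α < x n := hxαlt n
          refine ⟨⟨le_of_lt hαxn, le_trans (le_of_lt (hxlt n)) hyβ⟩, ?_⟩
          have := hyA.2
          nlinarith [hxlt n]
        have := csInf_le hAbdd hxA
        linarith [hxlt n]
    have hσαβ : σ α < σ β := by
      apply hmono α ⟨lt_of_lt_of_le h0 huα, le_trans (le_of_lt hαβ) hβv⟩ β
        ⟨lt_of_lt_of_le h0 (le_trans huα (le_of_lt hαβ)), hβv⟩ hαβ
    have hκ : (0:ℝ) < (σ β - σ α)/(2*(β - α)) := by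
      apply div_pos (by linarith)
      linarith
    have := key2 _ hκ
    have hβα : β - α > 0 := by linarith
    have : σ β - σ α ≤ (σ β - σ α)/2 := by
      have heq : (σ β - σ α)/(2*(β - α)) * (β - α) = (σ β - σ α)/2 := by
        field_simp
      linarith [heq ▸ this]
    linarith

/-- comparison lemma on a compact set `E ⊂ ℝ`. If `f` is u.s.c. and
left-continuous on `E`, `g` is continuous and strictly increasing on `E`,
the difference quotient over each hole of `E` is `≤ 1`, and the left liminf of the
difference quotient along limit points of `E` is `≤ 1`, then `f - g` is
nonincreasing on `E`. -/
theorem stmt1 (E : Set ℝ) (hE : IsCompact E) (hne : E.Nonempty)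
    (hlt : sInf E < sSup E)
    (f g : ℝ → ℝ)
    (husc : UpperSemicontinuousOn f E)
    (hleft : ∀ t ∈ E, Tendsto f (𝓝[E ∩ Iio t] t) (𝓝 (f t)))
    (hg : ContinuousOn g E) (hgmono : StrictMonoOn g E)
    (L : Set ℝ) (hL : L = {x | AccPt x (𝓟 E)})
    (hi : ∀ a ∈ E, ∀ b ∈ E, a < b → Ioo a b ∩ E = ∅ →
      (f b - f a) / (g b - g a) ≤ 1)
    (hii : ∀ t ∈ L, (𝓝[L ∩ Iio t] t).NeBot →
      Filter.liminf (fun s => (f t - f s) / (g t - g s)) (𝓝[L ∩ Iio t] t) ≤ 1) :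
    (∀ s ∈ E, ∀ t ∈ E, s ≤ t → f t - g t ≤ f s - g s) ∧
      f (sSup E) - f (sInf E) ≤ g (sSup E) - g (sInf E) := by
  have hEc : IsClosed E := hE.isClosed
  have hLE : L ⊆ E := by
    intro x hx
    rw [hL] at hx
    have h1 : ClusterPt x (𝓟 E) := AccPt.clusterPt hx
    have h2 : x ∈ closure E := mem_closure_iff_clusterPt.mpr h1
    rwa [hEc.closure_eq] at h2
  have gmono : ∀ x ∈ E, ∀ y ∈ E, x ≤ y → g x ≤ g y :=
    fun x hx y hy h => hgmono.monotoneOn hx hy h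
  have key : ∀ a, a ∈ E → ∀ b, b ∈ E → a < b → f b - f a ≤ g b - g a := by
    intro a ha b hb hab
    by_contra hcon
    push_neg at hcon
    have hgab : g a < g b := hgmono ha hb hab
    set δ₀ : ℝ := (f b - f a - (g b - g a)) / (g b - g a + 1) with hδ₀def
    have hδ₀pos : 0 < δ₀ := div_pos (by linarith) (by linarith)
    set k : ℝ → ℝ := fun δ => f a - (1+δ) * g a + δ with hkdef
    set T : ℝ → Set ℝ := fun δ => {t | t ∈ E ∧ t ∈ Icc a b ∧ k δ ≤ f t - (1+δ) * g t}
      with hTdef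
    have hTclosed : ∀ δ, IsClosed (T δ) :=
      fun δ => aux_closed E (Icc a b) hEc isClosed_Icc f g husc hg (k δ) (1+δ)
    have hδ₀mul : δ₀ * (g b - g a + 1) = f b - f a - (g b - g a) := by
      rw [hδ₀def]
      exact div_mul_cancel₀ _ (by linarith : g b - g a + 1 ≠ 0)
    have hbT : ∀ δ, 0 < δ → δ ≤ δ₀ → b ∈ T δ := by
      intro δ hd1 hd2
      refine ⟨hb, ⟨le_of_lt hab, le_refl b⟩, ?_⟩
      simp only [hkdef]
      nlinarith
    have hTne : ∀ δ, 0 < δ → δ ≤ δ₀ → (T δ).Nonempty := fun δ h1 h2 => ⟨b, hbT δ h1 h2⟩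
    have hTbdd : ∀ δ, BddBelow (T δ) := fun δ => ⟨a, fun t ht => ht.2.1.1⟩
    set c : ℝ → ℝ := fun δ => sInf (T δ) with hcdef
    have hcmem : ∀ δ, 0 < δ → δ ≤ δ₀ → c δ ∈ T δ := fun δ h1 h2 =>
      (hTclosed δ).csInf_mem (hTne δ h1 h2) (hTbdd δ)
    have hcE : ∀ δ, 0 < δ → δ ≤ δ₀ → c δ ∈ E := fun δ h1 h2 => (hcmem δ h1 h2).1
    have hcb : ∀ δ, 0 < δ → δ ≤ δ₀ → c δ ≤ b := fun δ h1 h2 => (hcmem δ h1 h2).2.1.2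
    have hac : ∀ δ, 0 < δ → δ ≤ δ₀ → a < c δ := by
      intro δ h1 h2
      rcases eq_or_lt_of_le (hcmem δ h1 h2).2.1.1 with h | h
      · exfalso
        have h3 := (hcmem δ h1 h2).2.2
        rw [← h] at h3
        simp only [hkdef] at h3
        linarith
      · exact h
    have hgac : ∀ δ, 0 < δ → δ ≤ δ₀ → g a < g (c δ) :=
      fun δ h1 h2 => hgmono ha (hcE δ h1 h2) (hac δ h1 h2)
    have hlow : ∀ δ, 0 < δ → δ ≤ δ₀ → ∀ s, s ∈ E → a ≤ s → s < c δ →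
        f s - (1+δ) * g s < k δ := by
      intro δ h1 h2 s hsE has hsc
      by_contra hcon2
      push_neg at hcon2
      have hsT : s ∈ T δ := ⟨hsE, ⟨has, le_trans (le_of_lt hsc) (hcb δ h1 h2)⟩, hcon2⟩
      have h4 : c δ ≤ s := csInf_le (hTbdd δ) hsT
      linarith
    have hbridge : ∀ δ, 0 < δ → δ ≤ δ₀ → ∀ s, s ∈ E → a ≤ s → s < c δ →
        f (c δ) - f s ≤ (1+δ) * (g (c δ) - g s) → False := by
      intro δ h1 h2 s hsE has hsc hfs
      have h3 := hlow δ h1 h2 s hsE has hsc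
      have h4 := (hcmem δ h1 h2).2.2
      have hexp : (1+δ) * (g (c δ) - g s) = (1+δ) * g (c δ) - (1+δ) * g s := by ring
      linarith
    have hpack : ∀ δ, 0 < δ → δ ≤ δ₀ → (c δ ∈ L) ∧ (f (c δ) - (1+δ) * g (c δ) = k δ) ∧
        Tendsto (fun s => (f (c δ) - f s)/(g (c δ) - g s)) (𝓝[L ∩ Iio (c δ)] (c δ)) atTop := by
      intro δ h1 h2
      by_cases hEacc : (𝓝[E ∩ Iio (c δ)] (c δ)).NeBot
      swap
      · -- C1 : hole to the left of c δ
        exfalso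
        have hncl : c δ ∉ closure (E ∩ Iio (c δ)) :=
          fun h => hEacc (mem_closure_iff_nhdsWithin_neBot.mp h)
        rw [Metric.mem_closure_iff] at hncl
        push_neg at hncl
        obtain ⟨ε, hε, hball⟩ := hncl
        have hgap : ∀ x, x ∈ E → x < c δ → x ≤ c δ - ε := by
          intro x hx hxc
          have h5 := hball x ⟨hx, hxc⟩
          rw [Real.dist_eq, abs_of_pos (by linarith)] at h5
          linarith
        have haε : a ≤ c δ - ε := hgap a ha (hac δ h1 h2)
        set D := E ∩ Icc a (c δ - ε) with hDdef
        have hDclosed : IsClosed D := hEc.inter isClosed_Icc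
        have hDne : D.Nonempty := ⟨a, ha, le_refl a, haε⟩
        have hDbdd : BddAbove D := ⟨c δ - ε, fun x hx => hx.2.2⟩
        set d := sSup D with hddef
        have hdD : d ∈ D := hDclosed.csSup_mem hDne hDbdd
        have hdc : d < c δ := by linarith [hdD.2.2]
        have hhole : Ioo d (c δ) ∩ E = ∅ := by
          ext x
          simp only [mem_inter_iff, mem_Ioo, mem_empty_iff_false, iff_false, not_and]
          rintro ⟨hx1, hx2⟩ hx3
          have hx4 : x ≤ c δ - ε := hgap x hx3 hx2
          have hx5 : x ∈ D := ⟨hx3, ⟨le_trans hdD.2.1 (le_of_lt hx1), hx4⟩⟩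
          have := le_csSup hDbdd hx5
          linarith
        have hgd : g d < g (c δ) := hgmono hdD.1 (hcE δ h1 h2) hdc
        have hq := hi d hdD.1 (c δ) (hcE δ h1 h2) hdc hhole
        rw [div_le_one (by linarith)] at hq
        exact hbridge δ h1 h2 d hdD.1 hdD.2.1 hdc (by nlinarith)
      by_cases hLacc : (𝓝[L ∩ Iio (c δ)] (c δ)).NeBot
      swap
      · -- C2 : no L-points just left of c δ; chain of isolated points
        exfalso
        have hnclL : c δ ∉ closure (L ∩ Iio (c δ)) :=
          fun h => hLacc (mem_closure_iff_nhdsWithin_neBot.mp h)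
        rw [Metric.mem_closure_iff] at hnclL
        push_neg at hnclL
        obtain ⟨ε, hε, hballL⟩ := hnclL
        have hgapL : ∀ x, x ∈ L → x < c δ → x ≤ c δ - ε := by
          intro x hx hxc
          have h5 := hballL x ⟨hx, hxc⟩
          rw [Real.dist_eq, abs_of_pos (by linarith)] at h5
          linarith
        have hclE : c δ ∈ closure (E ∩ Iio (c δ)) := mem_closure_iff_nhdsWithin_neBot.mpr hEacc
        rw [Metric.mem_closure_iff] at hclE
        set ε' := min ε (c δ - a) with hε'def
        have hε'pos : 0 < ε' := lt_min hε (by linarith [hac δ h1 h2])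
        obtain ⟨s₀, hs₀mem, hs₀d⟩ := hclE ε' hε'pos
        have hs₀E : s₀ ∈ E := hs₀mem.1
        have hs₀c : s₀ < c δ := hs₀mem.2
        have hs₀dist : c δ - s₀ < ε' := by
          rw [Real.dist_eq, abs_of_pos (by linarith)] at hs₀d
          linarith
        have has₀ : a < s₀ := by
          have h5 : ε' ≤ c δ - a := min_le_right _ _
          linarith
        have hs₀ε : c δ - ε < s₀ := by
          have h5 : ε' ≤ ε := min_le_left _ _
          linarith
        set W := {x | x ∈ E ∧ x ∈ Icc s₀ (c δ) ∧ f x - g x ≤ f s₀ - g s₀} with hWdef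
        have hs₀W : s₀ ∈ W := ⟨hs₀E, ⟨le_refl _, le_of_lt hs₀c⟩, le_refl _⟩
        have hWbdd : BddAbove W := ⟨c δ, fun x hx => hx.2.1.2⟩
        have hWne : W.Nonempty := ⟨s₀, hs₀W⟩
        set w := sSup W with hwdef
        have hwcl : w ∈ closure W := by
          rw [Metric.mem_closure_iff]
          intro r hr
          obtain ⟨x, hxW, hxr⟩ := exists_lt_of_lt_csSup hWne (by linarith : w - r < w)
          have hxw : x ≤ w := le_csSup hWbdd hxW
          exact ⟨x, hxW, by rw [Real.dist_eq, abs_of_nonneg (by linarith)]; linarith⟩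
        have hWsubE : W ⊆ E := fun x hx => hx.1
        have hwE : w ∈ E := by
          have h5 := closure_mono hWsubE hwcl
          rwa [hEc.closure_eq] at h5
        have hs₀w : s₀ ≤ w := le_csSup hWbdd hs₀W
        have hwc : w ≤ c δ := csSup_le hWne (fun x hx => hx.2.1.2)
        have hwW : w ∈ W := by
          by_cases hmem : w ∈ W
          · exact hmem
          · have hnb : (𝓝[W] w).NeBot := mem_closure_iff_nhdsWithin_neBot.mp hwcl
            have hWsub : W ⊆ E ∩ Iio w := by
              intro x hx
              refine ⟨hx.1, ?_⟩
              rcases eq_or_lt_of_le (le_csSup hWbdd hx) with h | h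
              · exfalso; apply hmem; rw [hwdef, ← h]; exact hx
              · exact h
            have ftend : Tendsto f (𝓝[W] w) (𝓝 (f w)) :=
              (hleft w hwE).mono_left (nhdsWithin_mono _ hWsub)
            have gtend : Tendsto g (𝓝[W] w) (𝓝 (g w)) :=
              (hg w hwE).mono_left (nhdsWithin_mono _ hWsubE)
            have htends : Tendsto (fun x => f x - g x) (𝓝[W] w) (𝓝 (f w - g w)) :=
              ftend.sub gtend
            have hev : ∀ᶠ x in 𝓝[W] w, f x - g x ≤ f s₀ - g s₀ := by
              filter_upwards [self_mem_nhdsWithin] with x hx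
              exact hx.2.2
            exact ⟨hwE, ⟨hs₀w, hwc⟩, le_of_tendsto htends hev⟩
        have hwceq : w = c δ := by
          by_contra hne2
          have hwc' : w < c δ := lt_of_le_of_ne hwc hne2
          have hwnL : w ∉ L := by
            intro hwL
            have := hgapL w hwL hwc'
            linarith
          have hwnAcc : ¬ (𝓝[E \ {w}] w).NeBot := by
            intro hacc2
            apply hwnL
            rw [hL]
            exact my_accPt_iff.mpr hacc2
          have hncl2 : w ∉ closure (E \ {w}) :=
            fun h => hwnAcc (mem_closure_iff_nhdsWithin_neBot.mp h)
          rw [Metric.mem_closure_iff] at hncl2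
          push_neg at hncl2
          obtain ⟨r, hr, hballr⟩ := hncl2
          set r' := min r (c δ - w) with hr'def
          have hr'pos : 0 < r' := lt_min hr (by linarith)
          have hgapr : ∀ x, x ∈ E → w < x → w + r' ≤ x := by
            intro x hx hwx
            have hxr := hballr x ⟨hx, by simp only [mem_singleton_iff]; exact ne_of_gt hwx⟩
            rw [Real.dist_eq, abs_of_nonpos (by linarith)] at hxr
            have h6 : r' ≤ r := min_le_left _ _
            linarith
          set S2 := E ∩ Icc (w + r') (c δ) with hS2def
          have hS2closed : IsClosed S2 := hEc.inter isClosed_Icc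
          have hcS2 : c δ ∈ S2 := by
            refine ⟨hcE δ h1 h2, ⟨?_, le_refl _⟩⟩
            have h6 : r' ≤ c δ - w := min_le_right _ _
            linarith
          have hS2bdd : BddBelow S2 := ⟨w + r', fun x hx => hx.2.1⟩
          set d' := sInf S2 with hd'def
          have hd'S2 : d' ∈ S2 := hS2closed.csInf_mem ⟨_, hcS2⟩ hS2bdd
          have hwd' : w < d' := by linarith [hd'S2.2.1]
          have hd'c : d' ≤ c δ := hd'S2.2.2
          have hhole2 : Ioo w d' ∩ E = ∅ := by
            ext x
            simp only [mem_inter_iff, mem_Ioo, mem_empty_iff_false, iff_false, not_and]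
            rintro ⟨hx1, hx2⟩ hx3
            have hx4 : w + r' ≤ x := hgapr x hx3 hx1
            have hx5 : x ∈ S2 := ⟨hx3, hx4, le_trans (le_of_lt hx2) hd'c⟩
            have := csInf_le hS2bdd hx5
            linarith
          have hgw : g w < g d' := hgmono hwE hd'S2.1 hwd'
          have hq2 := hi w hwE d' hd'S2.1 hwd' hhole2
          rw [div_le_one (by linarith)] at hq2
          have hd'W : d' ∈ W :=
            ⟨hd'S2.1, ⟨le_trans hs₀w (le_of_lt hwd'), hd'c⟩, by linarith [hwW.2.2]⟩
          have := le_csSup hWbdd hd'W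
          linarith
        have hfc : f (c δ) - f s₀ ≤ g (c δ) - g s₀ := by
          have h5 := hwW.2.2
          rw [hwceq] at h5
          linarith
        have hgs : g s₀ < g (c δ) := hgmono hs₀E (hcE δ h1 h2) hs₀c
        exact hbridge δ h1 h2 s₀ hs₀E (le_of_lt has₀) hs₀c (by nlinarith)
      -- C3
      have hcL : c δ ∈ L := by
        rw [hL]
        have hsub : L ∩ Iio (c δ) ⊆ E \ {c δ} := by
          intro x hx
          exact ⟨hLE hx.1, by simp only [mem_singleton_iff]; exact ne_of_lt hx.2⟩
        exact my_accPt_iff.mpr (hLacc.mono (nhdsWithin_mono _ hsub))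
      have hlim := hii (c δ) hcL hLacc
      by_cases hfreq : ∃ᶠ s in 𝓝[L ∩ Iio (c δ)] (c δ),
          (f (c δ) - f s)/(g (c δ) - g s) < 1 + δ
      · exfalso
        have hevgt : ∀ᶠ s in 𝓝[L ∩ Iio (c δ)] (c δ), a < s :=
          (eventually_gt_nhds (hac δ h1 h2)).filter_mono nhdsWithin_le_nhds
        have hmem' : ∀ᶠ s in 𝓝[L ∩ Iio (c δ)] (c δ), s ∈ L ∩ Iio (c δ) := self_mem_nhdsWithin
        obtain ⟨s, hq, hsmem, hsa⟩ := (hfreq.and_eventually (hmem'.and hevgt)).exists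
        have hsE : s ∈ E := hLE hsmem.1
        have hsc : s < c δ := hsmem.2
        have hgsc : g s < g (c δ) := hgmono hsE (hcE δ h1 h2) hsc
        have h6 : f (c δ) - f s ≤ (1+δ) * (g (c δ) - g s) :=
          le_of_lt ((div_lt_iff₀ (by linarith)).mp hq)
        exact hbridge δ h1 h2 s hsE (le_of_lt hsa) hsc h6
      · have hevge : ∀ᶠ s in 𝓝[L ∩ Iio (c δ)] (c δ),
            1 + δ ≤ (f (c δ) - f s)/(g (c δ) - g s) := by
          rw [Filter.not_frequently] at hfreq
          filter_upwards [hfreq] with s hs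
          exact not_lt.mp hs
        have hnbdd : ¬ BddAbove {x | ∀ᶠ s in 𝓝[L ∩ Iio (c δ)] (c δ),
            x ≤ (f (c δ) - f s)/(g (c δ) - g s)} := by
          intro hbd
          have h1δ : (1+δ) ∈ {x | ∀ᶠ s in 𝓝[L ∩ Iio (c δ)] (c δ),
              x ≤ (f (c δ) - f s)/(g (c δ) - g s)} := hevge
          have h7 := le_csSup hbd h1δ
          rw [Filter.liminf_eq] at hlim
          linarith
        have htopq : Tendsto (fun s => (f (c δ) - f s)/(g (c δ) - g s))
            (𝓝[L ∩ Iio (c δ)] (c δ)) atTop := by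
          rw [tendsto_atTop]
          intro b2
          obtain ⟨x, hxS, hbx⟩ := not_bddAbove_iff.mp hnbdd b2
          filter_upwards [hxS] with s hs
          linarith
        have heq : f (c δ) - (1+δ) * g (c δ) = k δ := by
          have hge := (hcmem δ h1 h2).2.2
          have ftend : Tendsto f (𝓝[E ∩ Iio (c δ)] (c δ)) (𝓝 (f (c δ))) :=
            hleft _ (hcE δ h1 h2)
          have gtend : Tendsto g (𝓝[E ∩ Iio (c δ)] (c δ)) (𝓝 (g (c δ))) :=
            (hg _ (hcE δ h1 h2)).mono_left (nhdsWithin_mono _ inter_subset_left)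
          have htendφ : Tendsto (fun s => f s - (1+δ) * g s) (𝓝[E ∩ Iio (c δ)] (c δ))
              (𝓝 (f (c δ) - (1+δ) * g (c δ))) := ftend.sub (gtend.const_mul (1+δ))
          have hev2 : ∀ᶠ s in 𝓝[E ∩ Iio (c δ)] (c δ), f s - (1+δ) * g s ≤ k δ := by
            have h5 : ∀ᶠ s in 𝓝[E ∩ Iio (c δ)] (c δ), a < s :=
              (eventually_gt_nhds (hac δ h1 h2)).filter_mono nhdsWithin_le_nhds
            filter_upwards [self_mem_nhdsWithin, h5] with s hs hs2
            exact le_of_lt (hlow δ h1 h2 s hs.1 (le_of_lt hs2) hs.2)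
          have h8 := le_of_tendsto htendφ hev2
          linarith
        exact ⟨hcL, heq, htopq⟩
    -- monotonicity / injectivity of c
    have hcmono : ∀ δ δ', 0 < δ → δ ≤ δ' → δ' ≤ δ₀ → c δ ≤ c δ' := by
      intro δ δ' hδ hδδ' hδ'
      apply le_csInf (hTne δ' (lt_of_lt_of_le hδ hδδ') hδ')
      intro t ht
      apply csInf_le (hTbdd δ)
      refine ⟨ht.1, ht.2.1, ?_⟩
      have h3 := ht.2.2
      have hgta : g a ≤ g t := gmono a ha t ht.1 ht.2.1.1
      simp only [hkdef] at h3 ⊢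
      nlinarith [mul_nonneg (sub_nonneg.mpr hδδ') (sub_nonneg.mpr hgta)]
    have hcinj : ∀ δ δ', 0 < δ → δ < δ' → δ' ≤ δ₀ → c δ < c δ' := by
      intro δ δ' hδ hδδ' hδ'
      have hle := hcmono δ δ' hδ (le_of_lt hδδ') hδ'
      rcases eq_or_lt_of_le hle with heq2 | h
      swap
      · exact h
      exfalso
      have e1 := (hpack δ hδ (le_trans (le_of_lt hδδ') hδ')).2.1
      have e2 := (hpack δ' (lt_trans hδ hδδ') hδ').2.1
      rw [heq2] at e1
      have hga : g a < g (c δ') := hgac δ' (lt_trans hδ hδδ') hδ'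
      simp only [hkdef] at e1 e2
      nlinarith [mul_pos (sub_pos.mpr hδδ') (sub_pos.mpr hga)]
    -- transfer to aux_no_flat
    have hσflat : ∀ δ ∈ Ioc (δ₀/2) δ₀, ∀ x : ℕ → ℝ, (∀ n, 0 < x n) →
        (∀ n, x n < x (n+1)) → (∀ n, x n < δ) → Tendsto x atTop (𝓝 δ) →
        Tendsto (fun n => (g (c δ) - g (c (x n))) / (δ - x n)) atTop (𝓝 0) := by
      rintro δ ⟨hδl, hδr⟩ x hxpos hxmono hxlt hxtend
      have hδpos : 0 < δ := lt_trans (half_pos hδ₀pos) hδl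
      have hxδ₀ : ∀ n, x n ≤ δ₀ := fun n => le_of_lt (lt_of_lt_of_le (hxlt n) hδr)
      have hxsm : StrictMono x := strictMono_nat_of_lt_succ hxmono
      set y : ℕ → ℝ := fun n => c (x n) with hydef
      have hymono : StrictMono y := by
        intro n m h
        exact hcinj (x n) (x m) (hxpos n) (hxsm h) (hxδ₀ m)
      have hyc : ∀ n, y n < c δ := fun n => hcinj (x n) δ (hxpos n) (hxlt n) hδr
      have hybddr : BddAbove (range y) := ⟨c δ, by rintro _ ⟨n, rfl⟩; exact le_of_lt (hyc n)⟩
      set chat := ⨆ n, y n with hchatdef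
      have hychat : ∀ n, y n < chat :=
        fun n => lt_of_lt_of_le (hymono (Nat.lt_succ_self n)) (le_ciSup hybddr (n+1))
      have hchatc : chat ≤ c δ := ciSup_le (fun n => le_of_lt (hyc n))
      have hytend : Tendsto y atTop (𝓝 chat) := tendsto_atTop_ciSup hymono.monotone hybddr
      have hyE : ∀ n, y n ∈ E := fun n => hcE (x n) (hxpos n) (hxδ₀ n)
      have hchatE : chat ∈ E := hEc.mem_of_tendsto hytend (Eventually.of_forall hyE)
      have hachat : a < chat := lt_trans (hac (x 0) (hxpos 0) (hxδ₀ 0)) (hychat 0)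
      have hchatb : chat ≤ b := le_trans hchatc (hcb δ hδpos hδr)
      have hytendW : Tendsto y atTop (𝓝[E ∩ Iio chat] chat) := by
        rw [tendsto_nhdsWithin_iff]
        exact ⟨hytend, Eventually.of_forall (fun n => ⟨hyE n, hychat n⟩)⟩
      have hftend : Tendsto (fun n => f (y n)) atTop (𝓝 (f chat)) :=
        (hleft chat hchatE).comp hytendW
      have hgtend : Tendsto (fun n => g (y n)) atTop (𝓝 (g chat)) :=
        Filter.Tendsto.comp (hg chat hchatE)
          (hytendW.mono_right (nhdsWithin_mono _ inter_subset_left))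
      have heqn : ∀ n, f (y n) - (1 + x n) * g (y n) = k (x n) :=
        fun n => (hpack (x n) (hxpos n) (hxδ₀ n)).2.1
      have hlhs : Tendsto (fun n => f (y n) - (1 + x n) * g (y n)) atTop
          (𝓝 (f chat - (1+δ) * g chat)) :=
        hftend.sub ((tendsto_const_nhds.add hxtend).mul hgtend)
      have hrhs : Tendsto (fun n => k (x n)) atTop (𝓝 (k δ)) := by
        simp only [hkdef]
        exact (tendsto_const_nhds.sub ((tendsto_const_nhds.add hxtend).mul_const (g a))).add
          hxtend
      have heqchat : f chat - (1+δ) * g chat = k δ := by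
        have hfn : (fun n => f (y n) - (1 + x n) * g (y n)) = fun n => k (x n) :=
          funext heqn
        rw [hfn] at hlhs
        exact tendsto_nhds_unique hlhs hrhs
      have hchatT : chat ∈ T δ := ⟨hchatE, ⟨le_of_lt hachat, hchatb⟩, le_of_eq heqchat.symm⟩
      have hchateq : chat = c δ := le_antisymm hchatc (csInf_le (hTbdd δ) hchatT)
      have hjunk := (hpack δ hδpos hδr).2.2
      have hyL : ∀ n, y n ∈ L := fun n => (hpack (x n) (hxpos n) (hxδ₀ n)).1
      have hytendL : Tendsto y atTop (𝓝[L ∩ Iio (c δ)] (c δ)) := by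
        rw [tendsto_nhdsWithin_iff]
        constructor
        · rw [← hchateq]; exact hytend
        · exact Eventually.of_forall (fun n => ⟨hyL n, hyc n⟩)
      have hqn : Tendsto (fun n => (f (c δ) - f (y n))/(g (c δ) - g (y n))) atTop atTop :=
        hjunk.comp hytendL
      have hgy : ∀ n, g (y n) < g (c δ) := fun n => hgmono (hyE n) (hcE δ hδpos hδr) (hyc n)
      have hMge : ∀ n, 1 ≤ g (y n) + 1 - g a := by
        intro n
        have := hgac (x n) (hxpos n) (hxδ₀ n)
        simp only [hydef]
        linarith
      have hid : ∀ n, f (c δ) - f (y n) =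
          (1+δ) * (g (c δ) - g (y n)) + (δ - x n) * (g (y n) + 1 - g a) := by
        intro n
        have e1 := (hpack δ hδpos hδr).2.1
        have e2 := heqn n
        simp only [hkdef] at e1 e2
        linear_combination e1 - e2
      have hRtend : Tendsto
          (fun n => (f (c δ) - f (y n))/(g (c δ) - g (y n)) - (1+δ)) atTop atTop :=
        tendsto_atTop_add_const_right _ _ hqn
      have hMtend : Tendsto (fun n => g (y n) + 1 - g a) atTop (𝓝 (g chat + 1 - g a)) :=
        (hgtend.add_const 1).sub_const (g a)
      have hfinal : ∀ n, (g (c δ) - g (c (x n))) / (δ - x n) =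
          (g (y n) + 1 - g a) /
            ((f (c δ) - f (y n))/(g (c δ) - g (y n)) - (1+δ)) := by
        intro n
        show (g (c δ) - g (y n)) / (δ - x n) = _
        have hD : (0:ℝ) < g (c δ) - g (y n) := by linarith [hgy n]
        have hdx : (0:ℝ) < δ - x n := by linarith [hxlt n]
        have hM : (0:ℝ) < g (y n) + 1 - g a := by linarith [hMge n]
        have hden : (f (c δ) - f (y n))/(g (c δ) - g (y n)) - (1+δ) =
            (δ - x n) * (g (y n) + 1 - g a) / (g (c δ) - g (y n)) := by
          rw [hid n]
          field_simp
          ring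
        have h1 := hD.ne'
        have h2 := hdx.ne'
        have h3 := hM.ne'
        rw [hden]
        field_simp
      have htarget : Tendsto (fun n => (g (y n) + 1 - g a) /
          ((f (c δ) - f (y n))/(g (c δ) - g (y n)) - (1+δ))) atTop (𝓝 0) :=
        Tendsto.div_atTop hMtend hRtend
      have hfn2 : (fun n => (g (c δ) - g (c (x n))) / (δ - x n)) = fun n =>
          (g (y n) + 1 - g a) / ((f (c δ) - f (y n))/(g (c δ) - g (y n)) - (1+δ)) :=
        funext hfinal
      rw [hfn2]
      exact htarget
    have hmonoσ : ∀ p ∈ Ioc (0:ℝ) δ₀, ∀ q ∈ Ioc (0:ℝ) δ₀, p < q → g (c p) < g (c q) := by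
      intro p hp q hq hpq
      exact hgmono (hcE p hp.1 hp.2) (hcE q hq.1 hq.2) (hcinj p q hp.1 hpq hq.2)
    exact aux_no_flat (δ₀/2) δ₀ (half_pos hδ₀pos) (half_lt_self hδ₀pos)
      (fun δ => g (c δ)) hmonoσ hσflat
  constructor
  · intro s hs t ht hst
    rcases eq_or_lt_of_le hst with h | h
    · rw [h]
    · have := key s hs t ht h
      linarith
  · have hsi : sInf E ∈ E := hE.sInf_mem hne
    have hss : sSup E ∈ E := hE.sSup_mem hne
    have := key (sInf E) hsi (sSup E) hss hlt
    linarith
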